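/- Symmetry of the construction under the reflection condition, 2D case: let θ be a linear order on ℤ satisfying the reflection condition (a ≺_θ b iff -b-1 ≺_θ -a-1). For p ≤ q coordinatewise in ℤ^2, the forward path from p to q generated by θ with axis-order (x_1, x_2) (steps in x_1 at rank among the first q_1-p_1 of θ[p_1+p_2, q_1+q_2-1]) equals, as a set of points, the backward path from q to p generated by θ restricted to [-(q_1+q_2), -(p_1+p_2)-1] with axis-order (x_2, x_1), where at a point r the backward path decrements x_2 if -(r_1+r_2) is among the (q_2-p_2) θ-smallest elements of θ[-(q_1+q_2), -(p_1+p_2)-1], else decrements x_1. -/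

import Mathlib

open scoped Classical

/-- One step of the total order construction in `ℤ²` for the positive quadrant:
from the point `m`, step in the `x₁` direction if `m.1 + m.2` is among the
`q.1 - p.1` smallest elements (w.r.t. `r`) of the interval
`[p.1 + p.2, q.1 + q.2 - 1]`, and otherwise step in the `x₂` direction. -/
noncomputable def step2 (r : ℤ → ℤ → Prop) (p q m : ℤ × ℤ) : ℤ × ℤ :=
  if ((Finset.Icc (p.1 + p.2) (q.1 + q.2 - 1)).filter
      (fun y => r y (m.1 + m.2))).card < (q.1 - p.1).toNat
  then (m.1 + 1, m.2) else (m.1, m.2 + 1)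

/-- The point visited after `j` steps of the total order construction path
from `p` towards `q` generated by the order `r`. -/
noncomputable def path2 (r : ℤ → ℤ → Prop) (p q : ℤ × ℤ) : ℕ → ℤ × ℤ
  | 0 => p
  | j + 1 => step2 r p q (path2 r p q j)

/-- One step of the backward total order construction from `q` towards `p`:
at the point `m`, decrement `x₂` if `-(m.1 + m.2)` is among the `q.2 - p.2`
smallest elements (w.r.t. `r`) of the interval `[-(q.1+q.2), -(p.1+p.2)-1]`,
else decrement `x₁`. -/
noncomputable def back2 (r : ℤ → ℤ → Prop) (p q : ℤ × ℤ) : ℕ → ℤ × ℤ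
  | 0 => q
  | j + 1 =>
    let m := back2 r p q j
    if ((Finset.Icc (-(q.1 + q.2)) (-(p.1 + p.2) - 1)).filter
        (fun y => r y (-(m.1 + m.2)))).card < (q.2 - p.2).toNat
    then (m.1, m.2 - 1) else (m.1 - 1, m.2)

section Aux

variable (r : ℤ → ℤ → Prop)

noncomputable def rk2 (A B s : ℤ) : ℕ :=
  ((Finset.Icc A (B - 1)).filter (fun y => r y s)).card

variable {r}

-- (aux lemmas pasted here)
lemma card_Icc' (A B : ℤ) : (Finset.Icc A (B - 1)).card = (B - A).toNat := by
  rw [Int.card_Icc]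
  congr 1
  ring

lemma rk2_lt (h : IsStrictTotalOrder ℤ r) {A B s : ℤ} (hs : s ∈ Finset.Icc A (B - 1)) :
    rk2 r A B s < (B - A).toNat := by
  rw [← card_Icc' A B]
  apply Finset.card_lt_card
  refine ⟨Finset.filter_subset _ _, fun hsub => ?_⟩
  have := hsub hs
  simp only [Finset.mem_filter] at this
  exact h.irrefl s this.2

lemma rk2_strict (h : IsStrictTotalOrder ℤ r) {A B s t : ℤ} (hs : s ∈ Finset.Icc A (B - 1))
    (hst : r s t) : rk2 r A B s < rk2 r A B t := by
  apply Finset.card_lt_card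
  constructor
  · intro y hy
    simp only [Finset.mem_filter] at hy ⊢
    exact ⟨hy.1, h.trans _ _ _ hy.2 hst⟩
  · intro hsub
    have hmem : s ∈ (Finset.Icc A (B - 1)).filter (fun y => r y t) := by
      simp only [Finset.mem_filter]; exact ⟨hs, hst⟩
    have := hsub hmem
    simp only [Finset.mem_filter] at this
    exact h.irrefl s this.2

lemma rk2_injOn (h : IsStrictTotalOrder ℤ r) {A B s t : ℤ} (hs : s ∈ Finset.Icc A (B - 1))
    (ht : t ∈ Finset.Icc A (B - 1)) (hst : rk2 r A B s = rk2 r A B t) : s = t := by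
  rcases (haveI := h; trichotomous_of (r := r) s t) with h1 | h1 | h1
  · exact absurd hst (Nat.ne_of_lt (rk2_strict h hs h1))
  · exact h1
  · exact absurd hst.symm (Nat.ne_of_lt (rk2_strict h ht h1))

lemma rk2_count (h : IsStrictTotalOrder ℤ r) {A B : ℤ} {a : ℕ} (ha : a ≤ (B - A).toNat) :
    ((Finset.Icc A (B - 1)).filter (fun s => rk2 r A B s < a)).card = a := by
  set N := (B - A).toNat with hN
  set I := Finset.Icc A (B - 1) with hI
  have hcard : I.card = N := card_Icc' A B
  have hinj : Set.InjOn (rk2 r A B) I := fun s hs t ht => rk2_injOn h hs ht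
  have himg : I.image (rk2 r A B) = Finset.range N := by
    apply Finset.eq_of_subset_of_card_le
    · intro x hx
      simp only [Finset.mem_image] at hx
      obtain ⟨s, hs, rfl⟩ := hx
      exact Finset.mem_range.mpr (rk2_lt h hs)
    · rw [Finset.card_range, ← hcard]
      exact le_of_eq (Finset.card_image_of_injOn hinj).symm
  have key : (I.filter (fun s => rk2 r A B s < a)).image (rk2 r A B)
      = (Finset.range N).filter (fun x => x < a) := by
    rw [← himg]
    exact (Finset.filter_image (p := fun x => x < a)).symm
  have h1 : ((I.filter (fun s => rk2 r A B s < a)).image (rk2 r A B)).card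
      = (I.filter (fun s => rk2 r A B s < a)).card :=
    Finset.card_image_of_injOn (hinj.mono (by intro x hx; exact Finset.mem_coe.mpr (Finset.mem_of_mem_filter x hx)))
  have h2 : (Finset.range N).filter (fun x => x < a) = Finset.range a := by
    ext x
    simp only [Finset.mem_filter, Finset.mem_range]
    omega
  rw [← h1, key, h2, Finset.card_range]

lemma rk2_comp (h : IsStrictTotalOrder ℤ r) {A B s : ℤ} (hs : s ∈ Finset.Icc A (B - 1)) :
    ((Finset.Icc A (B - 1)).filter (fun y => r s y)).card
      = (B - A).toNat - 1 - rk2 r A B s := by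
  have hpart : ((Finset.Icc A (B - 1)).filter (fun y => r y s)).card
      + ((Finset.Icc A (B - 1)).filter (fun y => ¬ r y s)).card = (Finset.Icc A (B - 1)).card :=
    Finset.card_filter_add_card_filter_not _
  have hneg : (Finset.Icc A (B - 1)).filter (fun y => ¬ r y s)
      = insert s ((Finset.Icc A (B - 1)).filter (fun y => r s y)) := by
    ext y
    simp only [Finset.mem_filter, Finset.mem_insert]
    constructor
    · rintro ⟨hy, hns⟩
      rcases (haveI := h; trichotomous_of (r := r) y s) with h1 | h1 | h1
      · exact absurd h1 hns
      · exact Or.inl h1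
      · exact Or.inr ⟨hy, h1⟩
    · rintro (rfl | ⟨hy, hsy⟩)
      · exact ⟨hs, h.irrefl y⟩
      · refine ⟨hy, fun hys => h.irrefl s (h.trans _ _ _ hsy hys)⟩
  have hnot : s ∉ (Finset.Icc A (B - 1)).filter (fun y => r s y) := by
    simp only [Finset.mem_filter]
    exact fun hc => h.irrefl s hc.2
  have hins : (insert s ((Finset.Icc A (B - 1)).filter (fun y => r s y))).card
      = ((Finset.Icc A (B - 1)).filter (fun y => r s y)).card + 1 :=
    Finset.card_insert_of_notMem hnot
  have hlt := rk2_lt h hs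
  have hcard : (Finset.Icc A (B - 1)).card = (B - A).toNat := card_Icc' A B
  rw [hneg, hins, hcard] at hpart
  unfold rk2 at hlt ⊢
  omega

lemma refl_card (h : IsStrictTotalOrder ℤ r)
    (hrefl : ∀ a b : ℤ, r a b ↔ r (-b - 1) (-a - 1)) (A B s : ℤ) :
    ((Finset.Icc (-B) (-A - 1)).filter (fun y => r y (-s - 1))).card
      = ((Finset.Icc A (B - 1)).filter (fun z => r s z)).card := by
  apply Finset.card_bij (fun y _ => -y - 1)
  · intro y hy
    simp only [Finset.mem_filter, Finset.mem_Icc] at hy ⊢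
    refine ⟨⟨by omega, by omega⟩, ?_⟩
    have := (hrefl y (-s - 1)).mp hy.2
    have heq : (-(-s - 1) - 1 : ℤ) = s := by ring
    rwa [heq] at this
  · intro y hy y' hy' hyy
    omega
  · intro z hz
    simp only [Finset.mem_filter, Finset.mem_Icc] at hz
    refine ⟨-z - 1, ?_, by ring⟩
    simp only [Finset.mem_filter, Finset.mem_Icc]
    refine ⟨⟨by omega, by omega⟩, ?_⟩
    have := (hrefl (-z - 1) (-s - 1)).mpr
    have heq1 : (-(-s - 1) - 1 : ℤ) = s := by ring
    have heq2 : (-(-z - 1) - 1 : ℤ) = z := by ring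
    rw [heq1, heq2] at this
    exact this hz.2



lemma step2_eq (p q m : ℤ × ℤ) :
    step2 r p q m = if rk2 r (p.1 + p.2) (q.1 + q.2) (m.1 + m.2) < (q.1 - p.1).toNat
      then (m.1 + 1, m.2) else (m.1, m.2 + 1) := rfl

lemma path2_sum (p q : ℤ × ℤ) : ∀ k : ℕ,
    (path2 r p q k).1 + (path2 r p q k).2 = (p.1 + p.2) + k := by
  intro k
  induction k with
  | zero => simp [path2]
  | succ k ih =>
    show (step2 r p q (path2 r p q k)).1 + (step2 r p q (path2 r p q k)).2 = _
    rw [step2_eq]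
    split_ifs <;> simp <;> push_cast <;> omega

lemma path2_fst (p q : ℤ × ℤ) : ∀ k : ℕ,
    (path2 r p q k).1 = p.1 + ((Finset.range k).filter
      (fun j : ℕ => rk2 r (p.1 + p.2) (q.1 + q.2) ((p.1 + p.2) + (j : ℤ)) < (q.1 - p.1).toNat)).card := by
  intro k
  induction k with
  | zero => simp [path2]
  | succ k ih =>
    show (step2 r p q (path2 r p q k)).1 = _
    rw [step2_eq]
    have hsum := path2_sum (r := r) p q k
    rw [Finset.range_add_one, Finset.filter_insert]
    by_cases hk : rk2 r (p.1 + p.2) (q.1 + q.2) ((p.1 + p.2) + (k : ℤ)) < (q.1 - p.1).toNat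
    · rw [if_pos (by rw [hsum]; exact hk), if_pos hk,
        Finset.card_insert_of_notMem (by simp)]
      simp only []
      rw [ih]
      push_cast
      ring
    · rw [if_neg (by rw [hsum]; exact hk), if_neg hk]
      simpa using ih

lemma path2_N (h : IsStrictTotalOrder ℤ r) (p q : ℤ × ℤ) (h1 : p.1 ≤ q.1) (h2 : p.2 ≤ q.2) :
    path2 r p q ((q.1 - p.1) + (q.2 - p.2)).toNat = q := by
  set N := ((q.1 - p.1) + (q.2 - p.2)).toNat with hN
  have hcount : ((Finset.range N).filter
      (fun j : ℕ => rk2 r (p.1 + p.2) (q.1 + q.2) ((p.1 + p.2) + (j : ℤ)) < (q.1 - p.1).toNat)).card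
      = (q.1 - p.1).toNat := by
    refine Eq.trans ?_ (rk2_count h (A := p.1 + p.2) (B := q.1 + q.2) (a := (q.1 - p.1).toNat) (by omega))
    refine Finset.card_bij (fun (j : ℕ) (_ : j ∈ (Finset.range N).filter _) => (p.1 + p.2) + (j : ℤ)) ?_ ?_ ?_
    · intro j hj
      simp only [Finset.mem_filter, Finset.mem_range] at hj
      simp only [Finset.mem_filter, Finset.mem_Icc]
      exact ⟨⟨by omega, by omega⟩, hj.2⟩
    · intro j hj j' hj' hjj
      beta_reduce at hjj
      omega
    · intro s hs
      simp only [Finset.mem_filter, Finset.mem_Icc] at hs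
      have heq : (p.1 + p.2) + ((s - (p.1 + p.2)).toNat : ℤ) = s := by omega
      refine ⟨(s - (p.1 + p.2)).toNat, ?_, heq⟩
      simp only [Finset.mem_filter, Finset.mem_range]
      refine ⟨by omega, ?_⟩
      rw [heq]
      exact hs.2
  have hfst := path2_fst (r := r) p q N
  have hsum := path2_sum (r := r) p q N
  rw [hcount] at hfst
  exact Prod.ext (by omega) (by omega)

lemma back2_eq_path2 (h : IsStrictTotalOrder ℤ r)
    (hrefl : ∀ a b : ℤ, r a b ↔ r (-b - 1) (-a - 1))
    (p q : ℤ × ℤ) (h1 : p.1 ≤ q.1) (h2 : p.2 ≤ q.2) :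
    ∀ j ≤ ((q.1 - p.1) + (q.2 - p.2)).toNat,
      back2 r p q j = path2 r p q (((q.1 - p.1) + (q.2 - p.2)).toNat - j) := by
  set N := ((q.1 - p.1) + (q.2 - p.2)).toNat with hN
  intro j
  induction j with
  | zero => intro _; rw [Nat.sub_zero]; exact (path2_N h p q h1 h2).symm
  | succ j ih =>
    intro hj
    have ihe := ih (by omega)
    obtain ⟨k, hk⟩ : ∃ k, N - j = k + 1 := ⟨N - (j + 1), by omega⟩
    have hkN : k < N := by omega
    have hk2 : N - (j + 1) = k := by omega
    set m := path2 r p q k with hm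
    have hsum : m.1 + m.2 = (p.1 + p.2) + (k : ℤ) := path2_sum (r := r) p q k
    have hs : m.1 + m.2 ∈ Finset.Icc (p.1 + p.2) (q.1 + q.2 - 1) := by
      simp only [Finset.mem_Icc]
      omega
    have hsum' : (path2 r p q (k + 1)).1 + (path2 r p q (k + 1)).2
        = (p.1 + p.2) + ((k : ℤ) + 1) := by
      have := path2_sum (r := r) p q (k + 1)
      push_cast at this
      omega
    have hlt := rk2_lt h hs
    have hbc : ((Finset.Icc (-(q.1 + q.2)) (-(p.1 + p.2) - 1)).filter
        (fun y => r y (-((path2 r p q (k + 1)).1 + (path2 r p q (k + 1)).2)))).card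
        = (q.1 + q.2 - (p.1 + p.2)).toNat - 1
          - rk2 r (p.1 + p.2) (q.1 + q.2) (m.1 + m.2) := by
      have hneg : -((path2 r p q (k + 1)).1 + (path2 r p q (k + 1)).2)
          = -(m.1 + m.2) - 1 := by omega
      rw [hneg, refl_card h hrefl (p.1 + p.2) (q.1 + q.2) (m.1 + m.2), rk2_comp h hs]
    have hp : path2 r p q (k + 1) = step2 r p q m := rfl
    show (let M := back2 r p q j;
      if ((Finset.Icc (-(q.1 + q.2)) (-(p.1 + p.2) - 1)).filter
          (fun y => r y (-(M.1 + M.2)))).card < (q.2 - p.2).toNat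
      then (M.1, M.2 - 1) else (M.1 - 1, M.2)) = path2 r p q (N - (j + 1))
    simp only [ihe, hk, hk2]
    rw [hbc]
    by_cases hc : rk2 r (p.1 + p.2) (q.1 + q.2) (m.1 + m.2) < (q.1 - p.1).toNat
    · rw [if_neg (by omega), hp, step2_eq, if_pos hc]
      exact Prod.ext (by simp [hm]) (by simp [hm])
    · rw [if_pos (by omega), hp, step2_eq, if_neg hc]
      exact Prod.ext (by simp [hm]) (by simp [hm])

end Aux

theorem stmt_16 (r : ℤ → ℤ → Prop) (h : IsStrictTotalOrder ℤ r)
    (hrefl : ∀ a b : ℤ, r a b ↔ r (-b - 1) (-a - 1))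
    (p q : ℤ × ℤ) (h1 : p.1 ≤ q.1) (h2 : p.2 ≤ q.2) :
    {x : ℤ × ℤ | ∃ j ≤ ((q.1 - p.1) + (q.2 - p.2)).toNat, path2 r p q j = x} =
    {x : ℤ × ℤ | ∃ j ≤ ((q.1 - p.1) + (q.2 - p.2)).toNat, back2 r p q j = x} := by
  ext x
  simp only [Set.mem_setOf_eq]
  constructor
  · rintro ⟨j, hj, rfl⟩
    refine ⟨((q.1 - p.1) + (q.2 - p.2)).toNat - j, by omega, ?_⟩
    rw [back2_eq_path2 h hrefl p q h1 h2 _ (by omega)]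
    congr 1
    omega
  · rintro ⟨j, hj, rfl⟩
    exact ⟨((q.1 - p.1) + (q.2 - p.2)).toNat - j, by omega,
      (back2_eq_path2 h hrefl p q h1 h2 j hj).symm⟩
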